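/- Let |q|<1 and let x,y,z be complex with y ≠ q^{-n} and y ≠ xzq^n for all integers n ≥ 0. Define φ(x,y,z,q) = Σ_{n≥0} x^n q^{n(n+1)/2} (-z;q)_n / ((y;q)_{n+1} (q;q)_n), and for each positive integer m define e_m(x,y,z,q) = Σ_{n,j,l≥0} x^n q^{n(n+1)/2} [n+j choose j]_q y^j [m-1-j-l choose n]_q q^{l(l-1)/2} z^l [n choose l]_q. Then for m ≥ 2, φ(xq^m,y,z,q) = (e_m(x,y,z,q) φ(xq,y,z,q) − e_{m-1}(xq,y,z,q) φ(x,y,z,q)) / ∏_{j=1}^{m-1}(y − xz q^j). -/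

import Mathlib

open scoped BigOperators

noncomputable def qPoch (a q : ℂ) (n : ℕ) : ℂ := ∏ i ∈ Finset.range n, (1 - a * q ^ i)

noncomputable def qPochInf (a q : ℂ) : ℂ := ∏' i : ℕ, (1 - a * q ^ i)

/-- q-Pochhammer with integer index, standard convention for negative index. -/
noncomputable def qPochZ (a q : ℂ) (n : ℤ) : ℂ :=
  if 0 ≤ n then ∏ i ∈ Finset.range n.toNat, (1 - a * q ^ i)
  else 1 / ∏ i ∈ Finset.range (-n).toNat, (1 - a * q ^ (-(i : ℤ) - 1))

/-- Gaussian binomial coefficient, zero unless 0 ≤ k ≤ n. -/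
noncomputable def qbinom (n k : ℤ) (q : ℂ) : ℂ :=
  if 0 ≤ k ∧ k ≤ n then
    (∏ i ∈ Finset.range k.toNat, (1 - q ^ (n - (i : ℤ)))) /
      (∏ i ∈ Finset.range k.toNat, (1 - q ^ (i + 1)))
  else 0

noncomputable def phi (x y z q : ℂ) : ℂ :=
  ∑' n : ℕ, x ^ n * q ^ (n * (n + 1) / 2) * qPoch (-z) q n /
    (qPoch y q (n + 1) * qPoch q q n)

noncomputable def eP (m : ℕ) (x y z q : ℂ) : ℂ :=
  ∑' n : ℕ, ∑' j : ℕ, ∑' l : ℕ,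
    x ^ n * q ^ (n * (n + 1) / 2) * qbinom ((n : ℤ) + j) j q * y ^ j *
      qbinom ((m : ℤ) - 1 - j - l) n q * q ^ (l * (l - 1) / 2) * z ^ l * qbinom n l q

/-! ### Auxiliary arithmetic lemmas -/

lemma tri_succ' (n : ℕ) : (n+1) * (n+1+1) / 2 = n * (n+1) / 2 + (n+1) := by
  have h : (n+1) * (n+1+1) = n * (n+1) + 2 * (n+1) := by ring
  omega

lemma tri_succ (l : ℕ) : (l+1) * ((l+1) - 1) / 2 = l * (l - 1) / 2 + l := by
  cases l with
  | zero => rfl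
  | succ k =>
    have h : (k+1+1) * ((k+1+1) - 1) = (k+1) * ((k+1) - 1) + 2 * (k+1) := by
      simp only [Nat.add_sub_cancel]; ring
    omega

/-! ### Basic facts about `qbinom` -/

lemma one_sub_qpow_ne_zero {q : ℂ} (hq : ‖q‖ < 1) (k : ℕ) (hk : k ≠ 0) :
    (1 : ℂ) - q ^ k ≠ 0 := by
  intro h
  have h1 : q ^ k = 1 := by linear_combination -h
  have h2 : ‖q‖ ^ k < 1 := pow_lt_one₀ (norm_nonneg q) hq hk
  rw [← norm_pow, h1] at h2
  simp at h2

lemma denom_ne_zero {q : ℂ} (hq : ‖q‖ < 1) (k : ℕ) :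
    (∏ i ∈ Finset.range k, ((1:ℂ) - q ^ (i + 1))) ≠ 0 := by
  rw [Finset.prod_ne_zero_iff]
  intro i _
  exact one_sub_qpow_ne_zero hq (i+1) (by omega)

lemma qbinom_eq_zero_of_lt {q : ℂ} {N k : ℤ} (h : N < k) : qbinom N k q = 0 := by
  rw [qbinom, if_neg]; omega

lemma qbinom_eq_zero_of_neg {q : ℂ} {N k : ℤ} (h : k < 0) : qbinom N k q = 0 := by
  rw [qbinom, if_neg]; omega

lemma qbinom_zero_right {q : ℂ} {N : ℤ} (h : 0 ≤ N) : qbinom N 0 q = 1 := by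
  rw [qbinom, if_pos ⟨le_refl 0, h⟩]
  simp

lemma qbinom_nat (q : ℂ) (n k : ℕ) (h : k ≤ n) :
    qbinom n k q = (∏ i ∈ Finset.range k, (1 - q ^ (n - i))) /
      (∏ i ∈ Finset.range k, (1 - q ^ (i + 1))) := by
  rw [qbinom, if_pos ⟨Int.ofNat_nonneg k, by exact_mod_cast h⟩]
  rw [Int.toNat_natCast]
  congr 1
  apply Finset.prod_congr rfl
  intro i hi
  simp only [Finset.mem_range] at hi
  congr 1
  rw [show (n : ℤ) - (i : ℤ) = ((n - i : ℕ) : ℤ) by omega, zpow_natCast]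

lemma qbinom_self {q : ℂ} (hq : ‖q‖ < 1) (n : ℕ) : qbinom n n q = 1 := by
  rw [qbinom_nat q n n le_rfl]
  have h : (∏ i ∈ Finset.range n, ((1:ℂ) - q ^ (n - i))) =
      ∏ i ∈ Finset.range n, ((1:ℂ) - q ^ (i + 1)) := by
    rw [← Finset.prod_range_reflect]
    apply Finset.prod_congr rfl
    intro i hi
    simp only [Finset.mem_range] at hi
    congr 2
    omega
  rw [h, div_self (denom_ne_zero hq n)]

lemma pascalB {q : ℂ} (hq : ‖q‖ < 1) (n k : ℕ) :
    qbinom ((n : ℤ) + 1) k q = q ^ k * qbinom n k q + qbinom n ((k : ℤ) - 1) q := by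
  rw [show (n : ℤ) + 1 = ((n + 1 : ℕ) : ℤ) by push_cast; ring]
  rcases k with _ | k'
  · rw [Nat.cast_zero, qbinom_zero_right (by positivity), qbinom_zero_right (by positivity),
      qbinom_eq_zero_of_neg (by norm_num)]
    ring
  · rw [show ((k' + 1 : ℕ) : ℤ) - 1 = ((k' : ℕ) : ℤ) by push_cast; ring]
    by_cases hk : k' + 1 ≤ n + 1
    · by_cases hk2 : k' + 1 ≤ n
      · rw [qbinom_nat _ _ _ hk, qbinom_nat _ _ _ hk2, qbinom_nat _ _ _ (by omega)]
        have hnum1 : (∏ i ∈ Finset.range (k'+1), ((1:ℂ) - q ^ (n + 1 - i))) =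
            (1 - q ^ (n + 1)) * ∏ i ∈ Finset.range k', ((1:ℂ) - q ^ (n - i)) := by
          rw [Finset.prod_range_succ']
          rw [Nat.sub_zero, mul_comm]
          congr 1
          apply Finset.prod_congr rfl
          intro i hi; congr 2; omega
        have hnum2 : (∏ i ∈ Finset.range (k'+1), ((1:ℂ) - q ^ (n - i))) =
            (∏ i ∈ Finset.range k', ((1:ℂ) - q ^ (n - i))) * (1 - q ^ (n - k')) := by
          rw [Finset.prod_range_succ]
        have hden : (∏ i ∈ Finset.range (k'+1), ((1:ℂ) - q ^ (i + 1))) =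
            (∏ i ∈ Finset.range k', ((1:ℂ) - q ^ (i + 1))) * (1 - q ^ (k' + 1)) := by
          rw [Finset.prod_range_succ]
        rw [hnum1, hnum2, hden, show n + 1 = (k'+1) + (n - k') by omega, pow_add]
        have hd1 := denom_ne_zero hq k'
        have hd2 : (1:ℂ) - q ^ (k' + 1) ≠ 0 := one_sub_qpow_ne_zero hq _ (by omega)
        field_simp
        ring
      · have hk' : n = k' := by omega
        subst hk'
        rw [qbinom_self hq (n+1), qbinom_eq_zero_of_lt (by omega), qbinom_self hq n]
        ring
    · rw [qbinom_eq_zero_of_lt (by omega), qbinom_eq_zero_of_lt (by omega),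
        qbinom_eq_zero_of_lt (by omega)]
      ring

lemma pascalA {q : ℂ} (hq : ‖q‖ < 1) (N : ℤ) (n : ℕ) :
    qbinom N ((n : ℤ) + 1) q =
      qbinom (N - 1) ((n : ℤ) + 1) q + q ^ (N - n - 1).toNat * qbinom (N - 1) n q := by
  by_cases hN : N ≤ n
  · rw [qbinom_eq_zero_of_lt (by omega), qbinom_eq_zero_of_lt (by omega),
      qbinom_eq_zero_of_lt (by omega)]
    ring
  · push_neg at hN
    obtain ⟨M, rfl⟩ : ∃ M : ℕ, N = (M : ℤ) := ⟨N.toNat, by omega⟩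
    have hM : n + 1 ≤ M := by omega
    rw [show ((M : ℤ) - 1) = ((M - 1 : ℕ) : ℤ) by omega,
      show ((M : ℤ) - n - 1).toNat = M - n - 1 by omega]
    by_cases hM2 : n + 2 ≤ M
    · rw [show ((n : ℤ) + 1) = ((n + 1 : ℕ) : ℤ) by push_cast; ring]
      rw [qbinom_nat _ _ _ hM, qbinom_nat _ _ _ (by omega), qbinom_nat _ _ _ (by omega)]
      have hnum1 : (∏ i ∈ Finset.range (n+1), ((1:ℂ) - q ^ (M - i))) =
          (1 - q ^ M) * ∏ i ∈ Finset.range n, ((1:ℂ) - q ^ (M - 1 - i)) := by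
        rw [Finset.prod_range_succ']
        rw [Nat.sub_zero, mul_comm]
        congr 1
        apply Finset.prod_congr rfl
        intro i hi; congr 2; omega
      have hnum2 : (∏ i ∈ Finset.range (n+1), ((1:ℂ) - q ^ (M - 1 - i))) =
          (∏ i ∈ Finset.range n, ((1:ℂ) - q ^ (M - 1 - i))) * (1 - q ^ (M - 1 - n)) := by
        rw [Finset.prod_range_succ]
      have hden : (∏ i ∈ Finset.range (n+1), ((1:ℂ) - q ^ (i + 1))) =
          (∏ i ∈ Finset.range n, ((1:ℂ) - q ^ (i + 1))) * (1 - q ^ (n + 1)) := by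
        rw [Finset.prod_range_succ]
      rw [hnum1, hnum2, hden,
        show q ^ M = q ^ (M - n - 1) * q ^ (n + 1) by rw [← pow_add]; congr 1; omega,
        show M - 1 - n = M - n - 1 from by omega]
      have hd1 := denom_ne_zero hq n
      have hd2 : (1:ℂ) - q ^ (n + 1) ≠ 0 := one_sub_qpow_ne_zero hq _ (by omega)
      field_simp
      ring
    · have hM3 : M = n + 1 := by omega
      subst hM3
      rw [show ((n : ℤ) + 1) = (((n + 1 : ℕ)) : ℤ) by push_cast; ring]
      rw [qbinom_self hq (n+1), qbinom_eq_zero_of_lt (by omega),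
        show ((n + 1 - 1 : ℕ) : ℤ) = ((n : ℕ) : ℤ) by omega, qbinom_self hq n,
        show n + 1 - n - 1 = 0 by omega]
      ring

/-! ### The function `phi` -/

noncomputable def cc (y z q : ℂ) (n : ℕ) : ℂ :=
  q ^ (n * (n + 1) / 2) * qPoch (-z) q n / (qPoch y q (n + 1) * qPoch q q n)

section phiSec

variable {q y z : ℂ} (hq : ‖q‖ < 1) (hy1 : ∀ n : ℕ, y ≠ q ^ (-(n : ℤ)))

lemma qPoch_succ (a q : ℂ) (n : ℕ) : qPoch a q (n + 1) = qPoch a q n * (1 - a * q ^ n) :=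
  Finset.prod_range_succ _ _

include hy1 in
lemma one_sub_yq_ne_zero (i : ℕ) : (1 : ℂ) - y * q ^ i ≠ 0 := by
  intro h
  have h1 : y * q ^ i = 1 := by linear_combination -h
  by_cases hq0 : q = 0
  · subst hq0
    rcases Nat.eq_zero_or_pos i with hi | hi
    · subst hi
      exact hy1 0 (by simpa using h1)
    · rw [zero_pow (by omega)] at h1; simp at h1
  · exact hy1 i (by
      rw [zpow_neg, zpow_natCast]
      field_simp
      linear_combination h1)

include hy1 in
lemma qPochy_ne_zero (n : ℕ) : qPoch y q n ≠ 0 := by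
  rw [qPoch, Finset.prod_ne_zero_iff]
  intro i _
  exact one_sub_yq_ne_zero hy1 i

include hq in
lemma qPochq_ne_zero (n : ℕ) : qPoch q q n ≠ 0 := by
  rw [qPoch, Finset.prod_ne_zero_iff]
  intro i _
  have h : (1:ℂ) - q ^ (i+1) ≠ 0 := one_sub_qpow_ne_zero hq (i+1) (by omega)
  rw [pow_succ'] at h
  exact h

include hq hy1 in
lemma cRec (n : ℕ) :
    (1 - q ^ (n+1)) * (1 - y * q ^ (n+1)) * cc y z q (n + 1) =
      q ^ (n+1) * (1 + z * q ^ n) * cc y z q n := by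
  have hT : (n+1) * (n+1+1) / 2 = n * (n+1) / 2 + (n+1) := tri_succ' n
  have h3 := qPochy_ne_zero hy1 (n+1)
  have h3' := qPochy_ne_zero hy1 (n+1+1)
  have h4 := qPochq_ne_zero hq n
  have h4' := qPochq_ne_zero hq (n+1)
  rw [cc, cc, hT, pow_add]
  rw [← mul_div_assoc, ← mul_div_assoc,
    div_eq_div_iff (mul_ne_zero h3' h4') (mul_ne_zero h3 h4)]
  rw [qPoch_succ y q (n+1), qPoch_succ q q n, qPoch_succ (-z) q n]
  ring

include hq hy1 in
lemma cc_ratio (n : ℕ) :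
    cc y z q (n + 1) =
      q ^ (n+1) * (1 + z * q ^ n) / ((1 - q ^ (n+1)) * (1 - y * q ^ (n+1))) * cc y z q n := by
  have h1 : (1:ℂ) - q ^ (n+1) ≠ 0 := one_sub_qpow_ne_zero hq (n+1) (by omega)
  have h2 : (1:ℂ) - y * q ^ (n+1) ≠ 0 := one_sub_yq_ne_zero hy1 (n+1)
  rw [div_mul_eq_mul_div, eq_div_iff (mul_ne_zero h1 h2)]
  linear_combination cRec hq hy1 (z := z) n

include hq hy1 in
lemma summable_xc (x : ℂ) : Summable (fun n => x ^ n * cc y z q n) := by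
  apply summable_of_ratio_norm_eventually_le (r := 1/2) (by norm_num)
  have hq0 : Filter.Tendsto (fun n : ℕ => q ^ n) Filter.atTop (nhds 0) :=
    tendsto_pow_atTop_nhds_zero_of_norm_lt_one (by exact hq)
  have hρ : Filter.Tendsto
      (fun n : ℕ => x * (q * q ^ n) * (1 + z * q ^ n) /
        ((1 - q * q ^ n) * (1 - y * (q * q ^ n)))) Filter.atTop (nhds 0) := by
    have hnum : Filter.Tendsto (fun n : ℕ => x * (q * q ^ n) * (1 + z * q ^ n))
        Filter.atTop (nhds 0) := by
      have l1 : Filter.Tendsto (fun n : ℕ => x * (q * q ^ n)) Filter.atTop (nhds 0) := by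
        simpa using (hq0.const_mul q).const_mul x
      have l2 : Filter.Tendsto (fun n : ℕ => 1 + z * q ^ n) Filter.atTop (nhds 1) := by
        simpa using (hq0.const_mul z).const_add 1
      simpa using l1.mul l2
    have hden : Filter.Tendsto
        (fun n : ℕ => (1 - q * q ^ n) * (1 - y * (q * q ^ n))) Filter.atTop (nhds 1) := by
      have l1 : Filter.Tendsto (fun n : ℕ => 1 - q * q ^ n) Filter.atTop (nhds 1) := by
        simpa using ((hq0.const_mul q).const_sub 1)
      have l2 : Filter.Tendsto (fun n : ℕ => 1 - y * (q * q ^ n)) Filter.atTop (nhds 1) := by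
        simpa using (((hq0.const_mul q).const_mul y).const_sub 1)
      simpa using l1.mul l2
    simpa [Pi.div_def] using hnum.div hden (by norm_num)
  have hev : ∀ᶠ n : ℕ in Filter.atTop,
      ‖x * (q * q ^ n) * (1 + z * q ^ n) /
        ((1 - q * q ^ n) * (1 - y * (q * q ^ n)))‖ < 1/2 := by
    have h := hρ.norm
    rw [norm_zero] at h
    exact h.eventually_lt_const (by norm_num)
  filter_upwards [hev] with n hn
  have hr : x ^ (n+1) * cc y z q (n + 1) =
      (x * (q * q ^ n) * (1 + z * q ^ n) /
        ((1 - q * q ^ n) * (1 - y * (q * q ^ n)))) * (x ^ n * cc y z q n) := by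
    rw [cc_ratio hq hy1 n, pow_succ' q n, pow_succ' x n]
    ring
  rw [hr, norm_mul]
  have hb := norm_nonneg (x ^ n * cc y z q n)
  nlinarith [hn, norm_nonneg (x * (q * q ^ n) * (1 + z * q ^ n) /
        ((1 - q * q ^ n) * (1 - y * (q * q ^ n))))]

lemma phi_eq (x : ℂ) : phi x y z q = ∑' n : ℕ, x ^ n * cc y z q n := by
  apply tsum_congr
  intro n
  rw [cc]
  ring

include hq hy1 in
lemma phiA (x : ℂ) :
    (y - x * z * q) * phi (x * q ^ 2) y z q =
      (1 + y + x * q) * phi (x * q) y z q - phi x y z q := by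
  set c : ℕ → ℂ := cc y z q with hc
  have S0 : Summable (fun n => x ^ n * c n) := summable_xc hq hy1 x
  have S1 : Summable (fun n => (x * q) ^ n * c n) := summable_xc hq hy1 (x * q)
  have S2 : Summable (fun n => (x * q ^ 2) ^ n * c n) := summable_xc hq hy1 (x * q ^ 2)
  set g : ℕ → ℂ := fun n =>
    ((x ^ n * c n - (x * q) ^ n * c n) - y * ((x * q) ^ n * c n)) + y * ((x * q ^ 2) ^ n * c n)
    with hg
  have Sg : Summable g := ((S0.sub S1).sub (S1.mul_left y)).add (S2.mul_left y)
  have hT1 : ∑' n, g n = (∑' n, x ^ n * c n) - (∑' n, (x * q) ^ n * c n)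
      - y * (∑' n, (x * q) ^ n * c n) + y * (∑' n, (x * q ^ 2) ^ n * c n) := by
    rw [hg, Summable.tsum_add ((S0.sub S1).sub (S1.mul_left y)) (S2.mul_left y),
      Summable.tsum_sub (S0.sub S1) (S1.mul_left y), Summable.tsum_sub S0 S1, tsum_mul_left, tsum_mul_left]
  have hg1 : ∀ n, g (n + 1) =
      x * q * ((x * q) ^ n * c n) + x * z * q * ((x * q ^ 2) ^ n * c n) := by
    intro n
    have hkey := cRec hq hy1 (z := z) n
    rw [← hc] at hkey
    have hexp : g (n+1) = (1 - q ^ (n+1)) * (1 - y * q ^ (n+1)) * (x ^ (n+1) * c (n+1)) := by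
      rw [hg]; ring
    rw [hexp]
    calc (1 - q ^ (n+1)) * (1 - y * q ^ (n+1)) * (x ^ (n+1) * c (n+1))
        = x ^ (n+1) * ((1 - q ^ (n+1)) * (1 - y * q ^ (n+1)) * c (n+1)) := by ring
      _ = x ^ (n+1) * (q ^ (n+1) * (1 + z * q ^ n) * c n) := by rw [hkey]
      _ = x * q * ((x * q) ^ n * c n) + x * z * q * ((x * q ^ 2) ^ n * c n) := by ring
  have hT2 : ∑' n, g n = g 0 + ∑' n, g (n + 1) := Summable.tsum_eq_zero_add Sg
  have hg0 : g 0 = 0 := by simp [hg]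
  have hT3 : ∑' n, g (n + 1) =
      x * q * (∑' n, (x * q) ^ n * c n) + x * z * q * (∑' n, (x * q ^ 2) ^ n * c n) := by
    have h : (fun n => g (n+1)) = fun n =>
        x * q * ((x * q) ^ n * c n) + x * z * q * ((x * q ^ 2) ^ n * c n) := funext hg1
    rw [h, Summable.tsum_add (S1.mul_left _) (S2.mul_left _), tsum_mul_left, tsum_mul_left]
  rw [phi_eq (x * q ^ 2), phi_eq (x * q), phi_eq x, ← hc]
  have hfin := hT1.symm.trans (hT2.trans (by rw [hg0, hT3, zero_add]))
  linear_combination hfin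

end phiSec

/-! ### The polynomials `eP` -/

noncomputable def tTerm (m : ℕ) (x y z q : ℂ) (n j l : ℕ) : ℂ :=
  x ^ n * q ^ (n * (n + 1) / 2) * qbinom ((n : ℤ) + j) j q * y ^ j *
    qbinom ((m : ℤ) - 1 - j - l) n q * q ^ (l * (l - 1) / 2) * z ^ l * qbinom n l q

noncomputable def hTerm (m : ℕ) (x y z q : ℂ) (n j l : ℕ) : ℂ :=
  x ^ (n+1) * q ^ (n * (n + 1) / 2 + (m - j - l)) * qbinom ((n : ℤ) + 1 + j) j q * y ^ j *
    qbinom ((m : ℤ) - 1 - j - l) n q * q ^ (l * (l - 1) / 2) * z ^ l * qbinom ((n : ℤ) + 1) l q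

noncomputable def Hsum (m : ℕ) (x y z q : ℂ) : ℂ :=
  ∑ n ∈ Finset.range m, ∑ j ∈ Finset.range m, ∑ l ∈ Finset.range m, hTerm m x y z q n j l

lemma eP_eq_tsum (m : ℕ) (x y z q : ℂ) :
    eP m x y z q = ∑' n : ℕ, ∑' j : ℕ, ∑' l : ℕ, tTerm m x y z q n j l := rfl

lemma tTerm_eq_zero (m : ℕ) (x y z q : ℂ) {n j l : ℕ} (h : m ≤ n + j + l) :
    tTerm m x y z q n j l = 0 := by
  rw [tTerm, qbinom_eq_zero_of_lt (show (m : ℤ) - 1 - j - l < (n : ℤ) by omega)]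
  ring

lemma hTerm_eq_zero (m : ℕ) (x y z q : ℂ) {n j l : ℕ} (h : m ≤ n + j + l) :
    hTerm m x y z q n j l = 0 := by
  rw [hTerm, qbinom_eq_zero_of_lt (show (m : ℤ) - 1 - j - l < (n : ℤ) by omega)]
  ring

lemma sum3_box (f : ℕ → ℕ → ℕ → ℂ) (m : ℕ) (hf : ∀ n j l, m ≤ n + j + l → f n j l = 0)
    {B1 B2 B3 : ℕ} (h1 : m ≤ B1) (h2 : m ≤ B2) (h3 : m ≤ B3) :
    (∑ n ∈ Finset.range B1, ∑ j ∈ Finset.range B2, ∑ l ∈ Finset.range B3, f n j l)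
      = ∑ n ∈ Finset.range m, ∑ j ∈ Finset.range m, ∑ l ∈ Finset.range m, f n j l := by
  have hl : ∀ n j, (∑ l ∈ Finset.range B3, f n j l) = ∑ l ∈ Finset.range m, f n j l := by
    intro n j
    refine (Finset.sum_subset (Finset.range_subset_range.2 h3) fun l _ hl => ?_).symm
    simp only [Finset.mem_range, not_lt] at hl
    exact hf n j l (by omega)
  have hj : ∀ n, (∑ j ∈ Finset.range B2, ∑ l ∈ Finset.range m, f n j l)
      = ∑ j ∈ Finset.range m, ∑ l ∈ Finset.range m, f n j l := by
    intro n
    refine (Finset.sum_subset (Finset.range_subset_range.2 h2) fun j _ hjj => ?_).symm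
    simp only [Finset.mem_range, not_lt] at hjj
    exact Finset.sum_eq_zero fun l _ => hf n j l (by omega)
  have hn : (∑ n ∈ Finset.range B1, ∑ j ∈ Finset.range m, ∑ l ∈ Finset.range m, f n j l)
      = ∑ n ∈ Finset.range m, ∑ j ∈ Finset.range m, ∑ l ∈ Finset.range m, f n j l := by
    refine (Finset.sum_subset (Finset.range_subset_range.2 h1) fun n _ hnn => ?_).symm
    simp only [Finset.mem_range, not_lt] at hnn
    exact Finset.sum_eq_zero fun j _ => Finset.sum_eq_zero fun l _ => hf n j l (by omega)
  calc (∑ n ∈ Finset.range B1, ∑ j ∈ Finset.range B2, ∑ l ∈ Finset.range B3, f n j l)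
      = ∑ n ∈ Finset.range B1, ∑ j ∈ Finset.range B2, ∑ l ∈ Finset.range m, f n j l := by
        exact Finset.sum_congr rfl fun n _ => Finset.sum_congr rfl fun j _ => hl n j
    _ = ∑ n ∈ Finset.range B1, ∑ j ∈ Finset.range m, ∑ l ∈ Finset.range m, f n j l := by
        exact Finset.sum_congr rfl fun n _ => hj n
    _ = _ := hn

lemma eP_eq_sum3 (m : ℕ) (x y z q : ℂ) {B1 B2 B3 : ℕ} (h1 : m ≤ B1) (h2 : m ≤ B2)
    (h3 : m ≤ B3) :
    eP m x y z q = ∑ n ∈ Finset.range B1, ∑ j ∈ Finset.range B2, ∑ l ∈ Finset.range B3,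
      tTerm m x y z q n j l := by
  rw [eP_eq_tsum]
  have hl : ∀ n j : ℕ, (∑' l : ℕ, tTerm m x y z q n j l)
      = ∑ l ∈ Finset.range B3, tTerm m x y z q n j l := by
    intro n j
    refine tsum_eq_sum fun l hl => ?_
    simp only [Finset.mem_range, not_lt] at hl
    exact tTerm_eq_zero m x y z q (by omega)
  have hj : ∀ n : ℕ, (∑' j : ℕ, ∑ l ∈ Finset.range B3, tTerm m x y z q n j l)
      = ∑ j ∈ Finset.range B2, ∑ l ∈ Finset.range B3, tTerm m x y z q n j l := by
    intro n
    refine tsum_eq_sum fun j hj => ?_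
    simp only [Finset.mem_range, not_lt] at hj
    exact Finset.sum_eq_zero fun l _ => tTerm_eq_zero m x y z q (by omega)
  calc (∑' n : ℕ, ∑' j : ℕ, ∑' l : ℕ, tTerm m x y z q n j l)
      = ∑' n : ℕ, ∑ j ∈ Finset.range B2, ∑ l ∈ Finset.range B3, tTerm m x y z q n j l := by
        exact tsum_congr fun n => (tsum_congr fun j => hl n j).trans (hj n)
    _ = _ := by
        refine tsum_eq_sum fun n hn => ?_
        simp only [Finset.mem_range, not_lt] at hn
        exact Finset.sum_eq_zero fun j _ => Finset.sum_eq_zero fun l _ =>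
          tTerm_eq_zero m x y z q (by omega)

lemma eP_zero (x y z q : ℂ) : eP 0 x y z q = 0 := by
  rw [eP_eq_sum3 0 x y z q (le_refl 0) (le_refl 0) (le_refl 0)]
  simp

lemma eP_one (x y z q : ℂ) : eP 1 x y z q = 1 := by
  rw [eP_eq_sum3 1 x y z q (le_refl 1) (le_refl 1) (le_refl 1)]
  simp only [Finset.sum_range_one]
  rw [tTerm]
  norm_num
  rw [qbinom_zero_right (le_refl 0)]
  norm_num

lemma PT1 {q : ℂ} (hq : ‖q‖ < 1) (m : ℕ) (x y z : ℂ) (n j l : ℕ) :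
    tTerm (m+1) x y z q (n+1) j l - tTerm m x y z q (n+1) j l = hTerm m x y z q n j l := by
  rw [tTerm, tTerm, hTerm]
  rw [show ((m + 1 : ℕ) : ℤ) - 1 - (j : ℤ) - (l : ℤ) = (m : ℤ) - j - l by push_cast; ring]
  rw [show ((n + 1 : ℕ) : ℤ) = (n : ℤ) + 1 by push_cast; ring]
  have hA := pascalA hq ((m : ℤ) - j - l) n
  rw [show (m : ℤ) - j - l - 1 = (m : ℤ) - 1 - j - l by ring] at hA
  rw [hA]
  by_cases hc : n + j + l + 1 ≤ m
  · rw [show ((m : ℤ) - j - l - n - 1).toNat = m - j - l - n - 1 by omega]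
    have hpow : q ^ ((n+1) * (n+1+1) / 2) * q ^ (m - j - l - n - 1)
        = q ^ (n * (n+1) / 2 + (m - j - l)) := by
      rw [← pow_add]
      congr 1
      have h := tri_succ' n
      omega
    linear_combination (x ^ (n+1) * qbinom ((n : ℤ) + 1 + j) j q * y ^ j *
      qbinom ((m : ℤ) - 1 - j - l) n q * q ^ (l * (l-1)/2) * z ^ l *
      qbinom ((n : ℤ) + 1) l q) * hpow
  · rw [qbinom_eq_zero_of_lt (show (m : ℤ) - 1 - j - l < (n : ℤ) by omega)]
    ring

lemma eP_step {q : ℂ} (hq : ‖q‖ < 1) (m : ℕ) (x y z : ℂ) :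
    eP (m+1) x y z q = eP m x y z q + Hsum m x y z q + y ^ m := by
  have e1 := eP_eq_sum3 (m+1) x y z q (show m+1 ≤ m+2 by omega) (show m+1 ≤ m+2 by omega)
    (show m+1 ≤ m+2 by omega)
  have e0 := eP_eq_sum3 m x y z q (show m ≤ m+2 by omega) (show m ≤ m+2 by omega)
    (show m ≤ m+2 by omega)
  have hzero : (∑ j ∈ Finset.range (m+2), ∑ l ∈ Finset.range (m+2),
      (tTerm (m+1) x y z q 0 j l - tTerm m x y z q 0 j l)) = y ^ m := by
    have hD0 : ∀ j l : ℕ, tTerm (m+1) x y z q 0 j l - tTerm m x y z q 0 j l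
        = if l = 0 then (if j = m then y ^ m else 0) else 0 := by
      intro j l
      rcases l with _ | l'
      · rw [if_pos rfl]
        have ht : ∀ M : ℕ, tTerm M x y z q 0 j 0
            = y ^ j * (if (j : ℤ) ≤ (M : ℤ) - 1 then 1 else 0) := by
          intro M
          rw [tTerm]
          by_cases hj : (j : ℤ) ≤ (M : ℤ) - 1
          · rw [if_pos hj]
            simp only [Nat.cast_zero, zero_add, sub_zero, pow_zero]
            rw [qbinom_self hq j, qbinom_zero_right (by omega),
              qbinom_zero_right (le_refl 0)]
            norm_num
          · rw [if_neg hj]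
            simp only [Nat.cast_zero, zero_add, sub_zero, pow_zero]
            rw [qbinom_eq_zero_of_lt (show (M : ℤ) - 1 - j < 0 by omega)]
            ring
        rw [ht (m+1), ht m]
        by_cases hjm : j = m
        · subst hjm
          rw [if_pos rfl, if_pos (by push_cast; omega), if_neg (by omega)]
          ring
        · rw [if_neg hjm]
          by_cases hjm2 : (j : ℤ) ≤ (m : ℤ) - 1
          · rw [if_pos hjm2, if_pos (by omega)]; ring
          · rw [if_neg hjm2, if_neg (by push_cast; omega)]; ring
      · rw [if_neg (by omega), tTerm, tTerm,
          qbinom_eq_zero_of_lt (show ((0:ℕ) : ℤ) < ((l'+1 : ℕ) : ℤ) by push_cast; omega)]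
        ring
    calc (∑ j ∈ Finset.range (m+2), ∑ l ∈ Finset.range (m+2),
        (tTerm (m+1) x y z q 0 j l - tTerm m x y z q 0 j l))
        = ∑ j ∈ Finset.range (m+2), ∑ l ∈ Finset.range (m+2),
            (if l = 0 then (if j = m then y ^ m else 0) else 0) := by
          exact Finset.sum_congr rfl fun j _ => Finset.sum_congr rfl fun l _ => hD0 j l
      _ = ∑ j ∈ Finset.range (m+2), (if j = m then y ^ m else 0) := by
          refine Finset.sum_congr rfl fun j _ => ?_
          rw [Finset.sum_ite_eq' (Finset.range (m+2)) 0 (fun _ => if j = m then y ^ m else 0)]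
          rw [if_pos (by simp)]
      _ = y ^ m := by
          rw [Finset.sum_ite_eq' (Finset.range (m+2)) m (fun _ => y ^ m)]
          rw [if_pos (by simp)]
  have hmain : (∑ n ∈ Finset.range (m+1), ∑ j ∈ Finset.range (m+2), ∑ l ∈ Finset.range (m+2),
      (tTerm (m+1) x y z q (n+1) j l - tTerm m x y z q (n+1) j l)) = Hsum m x y z q := by
    calc (∑ n ∈ Finset.range (m+1), ∑ j ∈ Finset.range (m+2), ∑ l ∈ Finset.range (m+2),
        (tTerm (m+1) x y z q (n+1) j l - tTerm m x y z q (n+1) j l))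
        = ∑ n ∈ Finset.range (m+1), ∑ j ∈ Finset.range (m+2), ∑ l ∈ Finset.range (m+2),
            hTerm m x y z q n j l := by
          exact Finset.sum_congr rfl fun n _ => Finset.sum_congr rfl fun j _ =>
            Finset.sum_congr rfl fun l _ => PT1 hq m x y z n j l
      _ = Hsum m x y z q := by
          rw [Hsum]
          exact sum3_box _ m (fun n j l h => hTerm_eq_zero m x y z q h)
            (by omega) (by omega) (by omega)
  have hsub : (∑ n ∈ Finset.range (m+2), ∑ j ∈ Finset.range (m+2), ∑ l ∈ Finset.range (m+2),
      (tTerm (m+1) x y z q n j l - tTerm m x y z q n j l)) = Hsum m x y z q + y ^ m := by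
    rw [Finset.sum_range_succ' (fun n => ∑ j ∈ Finset.range (m+2), ∑ l ∈ Finset.range (m+2),
      (tTerm (m+1) x y z q n j l - tTerm m x y z q n j l)) (m+1)]
    rw [hmain, hzero]
  have hexpand : (∑ n ∈ Finset.range (m+2), ∑ j ∈ Finset.range (m+2), ∑ l ∈ Finset.range (m+2),
      (tTerm (m+1) x y z q n j l - tTerm m x y z q n j l))
      = (∑ n ∈ Finset.range (m+2), ∑ j ∈ Finset.range (m+2), ∑ l ∈ Finset.range (m+2),
        tTerm (m+1) x y z q n j l)
      - (∑ n ∈ Finset.range (m+2), ∑ j ∈ Finset.range (m+2), ∑ l ∈ Finset.range (m+2),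
        tTerm m x y z q n j l) := by
    simp [Finset.sum_sub_distrib]
  rw [e1, e0]
  linear_combination hsub - hexpand

noncomputable def Pa (m : ℕ) (x y z q : ℂ) (n j l : ℕ) : ℂ :=
  x ^ (n+1) * q ^ (n * (n + 1) / 2 + (m + 1 - j - l) + j + l) * qbinom ((n : ℤ) + j) j q *
    y ^ j * qbinom ((m : ℤ) - j - l) n q * q ^ (l * (l - 1) / 2) * z ^ l * qbinom n l q

noncomputable def Pb (m : ℕ) (x y z q : ℂ) (n j l : ℕ) : ℂ :=
  x ^ (n+1) * q ^ (n * (n + 1) / 2 + (m + 1 - j - l) + j) * qbinom ((n : ℤ) + j) j q *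
    y ^ j * qbinom ((m : ℤ) - j - l) n q * q ^ (l * (l - 1) / 2) * z ^ l *
    qbinom n ((l : ℤ) - 1) q

noncomputable def Pc (m : ℕ) (x y z q : ℂ) (n j l : ℕ) : ℂ :=
  x ^ (n+1) * q ^ (n * (n + 1) / 2 + (m + 1 - j - l) + l) * qbinom ((n : ℤ) + j) ((j : ℤ) - 1) q *
    y ^ j * qbinom ((m : ℤ) - j - l) n q * q ^ (l * (l - 1) / 2) * z ^ l * qbinom n l q

noncomputable def Pd (m : ℕ) (x y z q : ℂ) (n j l : ℕ) : ℂ :=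
  x ^ (n+1) * q ^ (n * (n + 1) / 2 + (m + 1 - j - l)) * qbinom ((n : ℤ) + j) ((j : ℤ) - 1) q *
    y ^ j * qbinom ((m : ℤ) - j - l) n q * q ^ (l * (l - 1) / 2) * z ^ l *
    qbinom n ((l : ℤ) - 1) q

lemma hsplit {q : ℂ} (hq : ‖q‖ < 1) (m : ℕ) (x y z : ℂ) (n j l : ℕ) :
    hTerm (m+1) x y z q n j l = Pa m x y z q n j l + Pb m x y z q n j l
      + Pc m x y z q n j l + Pd m x y z q n j l := by
  rw [hTerm, Pa, Pb, Pc, Pd]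
  rw [show ((m + 1 : ℕ) : ℤ) - 1 - (j : ℤ) - (l : ℤ) = (m : ℤ) - j - l by push_cast; ring]
  rw [show (n : ℤ) + 1 + (j : ℤ) = ((n + j : ℕ) : ℤ) + 1 by push_cast; ring,
    pascalB hq (n+j) j, show ((n + j : ℕ) : ℤ) = (n : ℤ) + j by push_cast; ring]
  rw [pascalB hq n l]
  ring

lemma Pa_eq (m : ℕ) (x y z q : ℂ) (n j l : ℕ) :
    Pa m x y z q n j l = x * q ^ (m+1) * tTerm (m+1) x y z q n j l := by
  rw [Pa, tTerm]
  rw [show ((m + 1 : ℕ) : ℤ) - 1 - (j : ℤ) - (l : ℤ) = (m : ℤ) - j - l by push_cast; ring]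
  by_cases hc : j + l ≤ m + 1
  · have hpow : q ^ (n * (n + 1) / 2 + (m + 1 - j - l) + j + l)
        = q ^ (m+1) * q ^ (n * (n + 1) / 2) := by
      rw [← pow_add]; congr 1; omega
    linear_combination (x ^ (n+1) * qbinom ((n : ℤ) + j) j q * y ^ j *
      qbinom ((m : ℤ) - j - l) n q * q ^ (l * (l-1)/2) * z ^ l * qbinom (n : ℤ) (l : ℤ) q) * hpow
  · rw [qbinom_eq_zero_of_lt (show (m : ℤ) - j - l < (n : ℤ) by omega)]
    ring

lemma Pb_zero (m : ℕ) (x y z q : ℂ) (n j : ℕ) : Pb m x y z q n j 0 = 0 := by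
  rw [Pb, qbinom_eq_zero_of_neg (show ((0:ℕ) : ℤ) - 1 < 0 by norm_num)]
  ring

lemma Pb_succ (m : ℕ) (x y z q : ℂ) (n j l : ℕ) :
    Pb m x y z q n j (l+1) = x * z * q ^ m * tTerm m x y z q n j l := by
  rw [Pb, tTerm]
  rw [show ((l + 1 : ℕ) : ℤ) - 1 = (l : ℤ) by push_cast; ring]
  rw [show (m : ℤ) - (j : ℤ) - ((l+1 : ℕ) : ℤ) = (m : ℤ) - 1 - j - l by push_cast; ring]
  by_cases hc : j + l ≤ m
  · have hpow : q ^ (n * (n + 1) / 2 + (m + 1 - j - (l+1)) + j) * q ^ ((l+1) * ((l+1) - 1) / 2)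
        = q ^ m * (q ^ (n * (n + 1) / 2) * q ^ (l * (l - 1) / 2)) := by
      rw [← pow_add, ← pow_add, ← pow_add]
      congr 1
      have h := tri_succ l
      omega
    linear_combination (x ^ (n+1) * qbinom ((n : ℤ) + j) j q * y ^ j *
      qbinom ((m : ℤ) - 1 - j - l) n q * z ^ (l+1) * qbinom (n : ℤ) (l : ℤ) q) * hpow
  · rw [qbinom_eq_zero_of_lt (show (m : ℤ) - 1 - j - l < (n : ℤ) by omega)]
    ring

lemma Pc_zero (m : ℕ) (x y z q : ℂ) (n l : ℕ) : Pc m x y z q n 0 l = 0 := by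
  rw [Pc, qbinom_eq_zero_of_neg (show ((0:ℕ) : ℤ) - 1 < 0 by norm_num)]
  ring

lemma Pd_zero (m : ℕ) (x y z q : ℂ) (n l : ℕ) : Pd m x y z q n 0 l = 0 := by
  rw [Pd, qbinom_eq_zero_of_neg (show ((0:ℕ) : ℤ) - 1 < 0 by norm_num)]
  ring

lemma Pcd_succ {q : ℂ} (hq : ‖q‖ < 1) (m : ℕ) (x y z : ℂ) (n j l : ℕ) :
    Pc m x y z q n (j+1) l + Pd m x y z q n (j+1) l = y * hTerm m x y z q n j l := by
  rw [Pc, Pd, hTerm]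
  rw [show ((j + 1 : ℕ) : ℤ) - 1 = (j : ℤ) by push_cast; ring]
  rw [show (n : ℤ) + ((j+1 : ℕ) : ℤ) = (n : ℤ) + 1 + j by push_cast; ring]
  rw [show (m : ℤ) - ((j+1 : ℕ) : ℤ) - (l : ℤ) = (m : ℤ) - 1 - j - l by push_cast; ring]
  rw [show m + 1 - (j + 1) - l = m - j - l by omega]
  rw [pascalB hq n l]
  ring

lemma Hsum_step {q : ℂ} (hq : ‖q‖ < 1) (m : ℕ) (x y z : ℂ) :
    Hsum (m+1) x y z q = x * q ^ (m+1) * eP (m+1) x y z q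
      + x * z * q ^ m * eP m x y z q + y * Hsum m x y z q := by
  have h1 : Hsum (m+1) x y z q = ∑ n ∈ Finset.range (m+2), ∑ j ∈ Finset.range (m+2),
      ∑ l ∈ Finset.range (m+2), hTerm (m+1) x y z q n j l := by
    rw [Hsum]
    exact (sum3_box _ (m+1) (fun n j l h => hTerm_eq_zero (m+1) x y z q h)
      (by omega) (by omega) (by omega)).symm
  have hPa : (∑ n ∈ Finset.range (m+2), ∑ j ∈ Finset.range (m+2),
      ∑ l ∈ Finset.range (m+2), Pa m x y z q n j l) = x * q ^ (m+1) * eP (m+1) x y z q := by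
    calc (∑ n ∈ Finset.range (m+2), ∑ j ∈ Finset.range (m+2),
        ∑ l ∈ Finset.range (m+2), Pa m x y z q n j l)
        = ∑ n ∈ Finset.range (m+2), ∑ j ∈ Finset.range (m+2), ∑ l ∈ Finset.range (m+2),
            x * q ^ (m+1) * tTerm (m+1) x y z q n j l := by
          exact Finset.sum_congr rfl fun n _ => Finset.sum_congr rfl fun j _ =>
            Finset.sum_congr rfl fun l _ => Pa_eq m x y z q n j l
      _ = x * q ^ (m+1) * ∑ n ∈ Finset.range (m+2), ∑ j ∈ Finset.range (m+2),
            ∑ l ∈ Finset.range (m+2), tTerm (m+1) x y z q n j l := by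
          simp [Finset.mul_sum]
      _ = x * q ^ (m+1) * eP (m+1) x y z q := by
          rw [← eP_eq_sum3 (m+1) x y z q (show m+1 ≤ m+2 by omega) (show m+1 ≤ m+2 by omega)
            (show m+1 ≤ m+2 by omega)]
  have hPb : (∑ n ∈ Finset.range (m+2), ∑ j ∈ Finset.range (m+2),
      ∑ l ∈ Finset.range (m+2), Pb m x y z q n j l) = x * z * q ^ m * eP m x y z q := by
    have hinner : ∀ n j : ℕ, (∑ l ∈ Finset.range (m+2), Pb m x y z q n j l)
        = ∑ l ∈ Finset.range (m+1), x * z * q ^ m * tTerm m x y z q n j l := by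
      intro n j
      rw [Finset.sum_range_succ' (fun l => Pb m x y z q n j l) (m+1)]
      rw [Pb_zero, add_zero]
      exact Finset.sum_congr rfl fun l _ => Pb_succ m x y z q n j l
    calc (∑ n ∈ Finset.range (m+2), ∑ j ∈ Finset.range (m+2),
        ∑ l ∈ Finset.range (m+2), Pb m x y z q n j l)
        = ∑ n ∈ Finset.range (m+2), ∑ j ∈ Finset.range (m+2),
            ∑ l ∈ Finset.range (m+1), x * z * q ^ m * tTerm m x y z q n j l := by
          exact Finset.sum_congr rfl fun n _ => Finset.sum_congr rfl fun j _ => hinner n j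
      _ = x * z * q ^ m * ∑ n ∈ Finset.range (m+2), ∑ j ∈ Finset.range (m+2),
            ∑ l ∈ Finset.range (m+1), tTerm m x y z q n j l := by
          simp [Finset.mul_sum]
      _ = x * z * q ^ m * eP m x y z q := by
          rw [← eP_eq_sum3 m x y z q (show m ≤ m+2 by omega) (show m ≤ m+2 by omega)
            (show m ≤ m+1 by omega)]
  have hPcd : (∑ n ∈ Finset.range (m+2), ∑ j ∈ Finset.range (m+2),
      ∑ l ∈ Finset.range (m+2), (Pc m x y z q n j l + Pd m x y z q n j l))
      = y * Hsum m x y z q := by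
    have hmid : ∀ n : ℕ, (∑ j ∈ Finset.range (m+2), ∑ l ∈ Finset.range (m+2),
        (Pc m x y z q n j l + Pd m x y z q n j l))
        = ∑ j ∈ Finset.range (m+1), ∑ l ∈ Finset.range (m+2), y * hTerm m x y z q n j l := by
      intro n
      rw [Finset.sum_range_succ' (fun j => ∑ l ∈ Finset.range (m+2),
        (Pc m x y z q n j l + Pd m x y z q n j l)) (m+1)]
      have hz : (∑ l ∈ Finset.range (m+2), (Pc m x y z q n 0 l + Pd m x y z q n 0 l)) = 0 :=
        Finset.sum_eq_zero fun l _ => by rw [Pc_zero, Pd_zero]; ring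
      rw [hz, add_zero]
      exact Finset.sum_congr rfl fun j _ => Finset.sum_congr rfl fun l _ =>
        Pcd_succ hq m x y z n j l
    calc (∑ n ∈ Finset.range (m+2), ∑ j ∈ Finset.range (m+2),
        ∑ l ∈ Finset.range (m+2), (Pc m x y z q n j l + Pd m x y z q n j l))
        = ∑ n ∈ Finset.range (m+2), ∑ j ∈ Finset.range (m+1),
            ∑ l ∈ Finset.range (m+2), y * hTerm m x y z q n j l := by
          exact Finset.sum_congr rfl fun n _ => hmid n
      _ = y * ∑ n ∈ Finset.range (m+2), ∑ j ∈ Finset.range (m+1),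
            ∑ l ∈ Finset.range (m+2), hTerm m x y z q n j l := by
          simp [Finset.mul_sum]
      _ = y * Hsum m x y z q := by
          rw [Hsum]
          rw [sum3_box _ m (fun n j l h => hTerm_eq_zero m x y z q h)
            (show m ≤ m+2 by omega) (show m ≤ m+1 by omega) (show m ≤ m+2 by omega)]
  have hsplit' : (∑ n ∈ Finset.range (m+2), ∑ j ∈ Finset.range (m+2),
      ∑ l ∈ Finset.range (m+2), hTerm (m+1) x y z q n j l)
      = (∑ n ∈ Finset.range (m+2), ∑ j ∈ Finset.range (m+2),
          ∑ l ∈ Finset.range (m+2), Pa m x y z q n j l)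
      + (∑ n ∈ Finset.range (m+2), ∑ j ∈ Finset.range (m+2),
          ∑ l ∈ Finset.range (m+2), Pb m x y z q n j l)
      + (∑ n ∈ Finset.range (m+2), ∑ j ∈ Finset.range (m+2),
          ∑ l ∈ Finset.range (m+2), (Pc m x y z q n j l + Pd m x y z q n j l)) := by
    rw [← Finset.sum_add_distrib, ← Finset.sum_add_distrib]
    refine Finset.sum_congr rfl fun n _ => ?_
    rw [← Finset.sum_add_distrib, ← Finset.sum_add_distrib]
    refine Finset.sum_congr rfl fun j _ => ?_
    rw [← Finset.sum_add_distrib, ← Finset.sum_add_distrib]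
    refine Finset.sum_congr rfl fun l _ => ?_
    rw [hsplit hq m x y z n j l]
    ring
  rw [h1, hsplit', hPa, hPb, hPcd]

lemma eP_rec {q : ℂ} (hq : ‖q‖ < 1) (m : ℕ) (x y z : ℂ) :
    eP (m+2) x y z q = (1 + y + x * q ^ (m+1)) * eP (m+1) x y z q
      - (y - x * z * q ^ m) * eP m x y z q := by
  have h1 := eP_step hq (m+1) x y z
  have h2 := Hsum_step hq m x y z
  have h3 := eP_step hq m x y z
  linear_combination h1 + h2 - y * h3

lemma main_aux {q y z : ℂ} (hq : ‖q‖ < 1) (hy1 : ∀ n : ℕ, y ≠ q ^ (-(n : ℤ)))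
    (x : ℂ) : ∀ k : ℕ,
    phi (x * q ^ (k+1)) y z q * ∏ j ∈ Finset.Icc 1 k, (y - x * z * q ^ j)
      = eP (k+1) x y z q * phi (x * q) y z q - eP k (x * q) y z q * phi x y z q := by
  have base0 : phi (x * q ^ (0+1)) y z q * ∏ j ∈ Finset.Icc 1 0, (y - x * z * q ^ j)
      = eP (0+1) x y z q * phi (x * q) y z q - eP 0 (x * q) y z q * phi x y z q := by
    rw [show Finset.Icc 1 0 = (∅ : Finset ℕ) from Finset.Icc_eq_empty (by omega),
      Finset.prod_empty, eP_one, eP_zero, pow_one]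
    ring
  have base1 : phi (x * q ^ (1+1)) y z q * ∏ j ∈ Finset.Icc 1 1, (y - x * z * q ^ j)
      = eP (1+1) x y z q * phi (x * q) y z q - eP 1 (x * q) y z q * phi x y z q := by
    rw [Finset.Icc_self, Finset.prod_singleton, eP_one]
    have hrec := eP_rec hq 0 x y z
    rw [eP_one, eP_zero] at hrec
    have hA := phiA hq hy1 (z := z) x
    rw [show (1:ℕ) + 1 = 2 from rfl]
    rw [hrec]
    linear_combination hA
  have key : ∀ k : ℕ,
      (phi (x * q ^ (k+1)) y z q * ∏ j ∈ Finset.Icc 1 k, (y - x * z * q ^ j)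
        = eP (k+1) x y z q * phi (x * q) y z q - eP k (x * q) y z q * phi x y z q) ∧
      (phi (x * q ^ (k+1+1)) y z q * ∏ j ∈ Finset.Icc 1 (k+1), (y - x * z * q ^ j)
        = eP (k+1+1) x y z q * phi (x * q) y z q - eP (k+1) (x * q) y z q * phi x y z q) := by
    intro k
    induction k with
    | zero => exact ⟨base0, base1⟩
    | succ k ih =>
      obtain ⟨IH1, IH2⟩ := ih
      refine ⟨IH2, ?_⟩
      -- prove the statement for k+2
      have hA := phiA hq hy1 (z := z) (x * q ^ (k+1))
      rw [show x * q ^ (k+1) * q ^ 2 = x * q ^ (k+1+1+1) by ring,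
        show x * q ^ (k+1) * q = x * q ^ (k+1+1) by ring] at hA
      have hProd2 : (∏ j ∈ Finset.Icc 1 (k+2), (y - x * z * q ^ j))
          = (∏ j ∈ Finset.Icc 1 (k+1), (y - x * z * q ^ j)) * (y - x * z * q ^ (k+2)) := by
        rw [← Finset.prod_Icc_succ_top (show 1 ≤ k+2 by omega)]
      have hProd1 : (∏ j ∈ Finset.Icc 1 (k+1), (y - x * z * q ^ j))
          = (∏ j ∈ Finset.Icc 1 k, (y - x * z * q ^ j)) * (y - x * z * q ^ (k+1)) := by
        rw [← Finset.prod_Icc_succ_top (show 1 ≤ k+1 by omega)]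
      have hE := eP_rec hq (k+1) x y z
      have hF := eP_rec hq k (x * q) y z
      rw [show (k:ℕ)+1+1 = k+2 from rfl] at hProd2 IH2 hE hF hA ⊢
      rw [show (k:ℕ)+2+1 = k+3 from rfl] at hE ⊢
      rw [show (k:ℕ)+1+1+1 = k+3 from rfl] at hA
      linear_combination phi (x * q ^ (k+3)) y z q * hProd2
        + (∏ j ∈ Finset.Icc 1 (k+1), (y - x * z * q ^ j)) * hA
        + (1 + y + x * q ^ (k+2)) * IH2
        - (y - x * z * q ^ (k+1)) * IH1
        - phi (x * q) y z q * hE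
        + phi x y z q * hF
        - phi (x * q ^ (k+1)) y z q * hProd1
  exact fun k => (key k).1

theorem stmt1 (q x y z : ℂ) (hq : ‖q‖ < 1)
    (hy1 : ∀ n : ℕ, y ≠ q ^ (-(n : ℤ))) (hy2 : ∀ n : ℕ, y ≠ x * z * q ^ n)
    (m : ℕ) (hm : 2 ≤ m) :
    phi (x * q ^ m) y z q =
      (eP m x y z q * phi (x * q) y z q - eP (m - 1) (x * q) y z q * phi x y z q) /
        ∏ j ∈ Finset.Icc 1 (m - 1), (y - x * z * q ^ j) := by
  obtain ⟨k, rfl⟩ : ∃ k, m = k + 2 := ⟨m - 2, by omega⟩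
  have hkey := main_aux hq hy1 (z := z) x (k+1)
  rw [show (k:ℕ)+1+1 = k+2 from rfl] at hkey
  rw [show (k:ℕ)+2-1 = k+1 from rfl]
  have hne : (∏ j ∈ Finset.Icc 1 (k+1), (y - x * z * q ^ j)) ≠ 0 := by
    rw [Finset.prod_ne_zero_iff]
    intro j _
    exact sub_ne_zero.mpr (hy2 j)
  rw [eq_div_iff hne]
  linear_combination hkey
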